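/- With respect to the normalized basis e_s = x^{𝒩 + s n} y^{ℳ − s m} / √C_s (s = 0,…,r), where C_s = Π_l (𝒩_l + n_l s)! · Π_k (ℳ_k − m_k s)!, the matrix of H_1 = y^m ∂_x^n + x^n ∂_y^m is tridiagonal with zero diagonal, symmetric, and its off-diagonal entries are (H_1)_{s+1,s} = (Π_{l=1}^N Π_{j=0}^{n_l−1} (𝒩_l + n_l s + j + 1) · Π_{k=1}^M Π_{i=0}^{m_k−1} (ℳ_k − m_k s − i))^{1/2} for s = 0,…,r−1. -/

import Mathlib

open MvPolynomial
open Finset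

noncomputable def Dxn {N M : ℕ} (n : Fin N → ℕ) :
    Module.End ℝ (MvPolynomial (Fin N ⊕ Fin M) ℝ) :=
  (List.ofFn fun l : Fin N =>
    ((pderiv (Sum.inl l)).toLinearMap : Module.End ℝ (MvPolynomial (Fin N ⊕ Fin M) ℝ)) ^ n l).prod

noncomputable def Dym {N M : ℕ} (m : Fin M → ℕ) :
    Module.End ℝ (MvPolynomial (Fin N ⊕ Fin M) ℝ) :=
  (List.ofFn fun k : Fin M =>
    ((pderiv (Sum.inr k)).toLinearMap : Module.End ℝ (MvPolynomial (Fin N ⊕ Fin M) ℝ)) ^ m k).prod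

/-- `H₁ = y^m ∂_x^n + x^n ∂_y^m`. -/
noncomputable def H1 {N M : ℕ} (n : Fin N → ℕ) (m : Fin M → ℕ) :
    Module.End ℝ (MvPolynomial (Fin N ⊕ Fin M) ℝ) :=
  (LinearMap.mulLeft ℝ (∏ k : Fin M, X (Sum.inr k) ^ m k)).comp (Dxn n) +
    (LinearMap.mulLeft ℝ (∏ l : Fin N, X (Sum.inl l) ^ n l)).comp (Dym m)

/-- The monomial `x^i y^j`. -/
noncomputable def mon {N M : ℕ} (i : Fin N → ℕ) (j : Fin M → ℕ) :
    MvPolynomial (Fin N ⊕ Fin M) ℝ :=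
  monomial (Finsupp.equivFunOnFinite.symm (Sum.elim i j)) 1

/-- The normalization constant `C_s = Π_l (𝒩_l + n_l s)! · Π_k (ℳ_k - m_k s)!`. -/
def normC {N M : ℕ} (n : Fin N → ℕ) (m : Fin M → ℕ) (𝒩 : Fin N → ℕ) (ℳ : Fin M → ℕ)
    (s : ℕ) : ℕ :=
  (∏ l : Fin N, Nat.factorial (𝒩 l + n l * s)) * ∏ k : Fin M, Nat.factorial (ℳ k - m k * s)

/-- The normalized basis vector `e_s = x^{𝒩 + s n} y^{ℳ - s m} / √C_s`. -/
noncomputable def basisE {N M : ℕ} (n : Fin N → ℕ) (m : Fin M → ℕ) (𝒩 : Fin N → ℕ)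
    (ℳ : Fin M → ℕ) (s : ℕ) : MvPolynomial (Fin N ⊕ Fin M) ℝ :=
  (Real.sqrt (normC n m 𝒩 ℳ s))⁻¹ • mon (fun l => 𝒩 l + s * n l) fun k => ℳ k - s * m k

/-- The off-diagonal matrix entry
`(H₁)_{s+1,s} = (Π_l Π_{j<n_l} (𝒩_l + n_l s + j + 1) · Π_k Π_{i<m_k} (ℳ_k - m_k s - i))^½`. -/
noncomputable def offd {N M : ℕ} (n : Fin N → ℕ) (m : Fin M → ℕ) (𝒩 : Fin N → ℕ)
    (ℳ : Fin M → ℕ) (s : ℕ) : ℝ :=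
  Real.sqrt
    ((∏ l : Fin N, ∏ j ∈ Finset.range (n l), (𝒩 l + n l * s + j + 1)) *
      ∏ k : Fin M, ∏ i ∈ Finset.range (m k), (ℳ k - m k * s - i) : ℕ)


lemma fact_add_helper (a : ℕ) : ∀ b : ℕ, (a + b).factorial = a.factorial * ∏ j ∈ range b, (a + j + 1) := by
  intro b
  induction b with
  | zero => simp
  | succ b ih =>
    rw [prod_range_succ, ← mul_assoc, ← ih, show a + (b+1) = (a+b)+1 by ring, Nat.factorial_succ]
    ring_nf

lemma desc_add_helper (a b : ℕ) : (a + b).descFactorial b = ∏ j ∈ range b, (a + j + 1) := by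
  rw [Nat.descFactorial_eq_prod_range, ← Finset.prod_range_reflect]
  refine Finset.prod_congr rfl fun j hj => ?_
  have := Finset.mem_range.1 hj
  omega

lemma pderiv_pow_monomial {σ : Type*} (a : σ) (k : ℕ) (s : σ →₀ ℕ) (c : ℝ) :
    (((pderiv a).toLinearMap : Module.End ℝ (MvPolynomial σ ℝ)) ^ k) (monomial s c) =
      monomial (s - Finsupp.single a k) (c * (s a).descFactorial k) := by
  induction k with
  | zero => simp
  | succ k ih =>
    rw [pow_succ', Module.End.mul_apply, ih]
    rw [show (((pderiv a).toLinearMap : Module.End ℝ (MvPolynomial σ ℝ))) ((monomial (s - Finsupp.single a k)) (c * ((s a).descFactorial k : ℕ))) = (pderiv a) ((monomial (s - Finsupp.single a k)) (c * ((s a).descFactorial k : ℕ))) from rfl]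
    rw [pderiv_monomial, tsub_tsub, ← Finsupp.single_add]
    have h2 : (s - Finsupp.single a k) a = s a - k := by
      rw [Finsupp.tsub_apply, Finsupp.single_eq_same]
    rw [h2, Nat.descFactorial_succ]
    push_cast
    ring_nf

lemma sum_single_apply_zero {σ ι : Type*} (g : ι → σ) (e : ι → ℕ) (x : σ)
    (L : List ι) (hx : ∀ l ∈ L, g l ≠ x) :
    ((L.map fun l' => Finsupp.single (g l') (e l')).sum) x = 0 := by
  induction L with
  | nil => simp
  | cons a L ihL =>
    rw [List.map_cons, List.sum_cons, Finsupp.add_apply,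
      Finsupp.single_eq_of_ne' (hx a (by simp)), ihL fun l hl => hx l (by simp [hl])]

lemma list_pderiv_pow {σ ι : Type*} (g : ι → σ) (hg : Function.Injective g) (e : ι → ℕ) :
    ∀ (L : List ι), L.Nodup → ∀ (s : σ →₀ ℕ) (c : ℝ),
      ((L.map fun l => ((pderiv (g l)).toLinearMap : Module.End ℝ (MvPolynomial σ ℝ)) ^ e l).prod)
          (monomial s c) =
        monomial (s - (L.map fun l => Finsupp.single (g l) (e l)).sum)
          (c * ((L.map fun l => (s (g l)).descFactorial (e l)).prod : ℕ)) := by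
  intro L
  induction L with
  | nil => intro _ s c; simp
  | cons l L ih =>
    intro hnd s c
    have hl : l ∉ L := (List.nodup_cons.1 hnd).1
    rw [List.map_cons, List.prod_cons, Module.End.mul_apply, ih (List.nodup_cons.1 hnd).2,
      pderiv_pow_monomial]
    have harg : (s - (L.map fun l' => Finsupp.single (g l') (e l')).sum) (g l) = s (g l) := by
      rw [Finsupp.tsub_apply,
        sum_single_apply_zero g e (g l) L (fun a ha h => hl (hg h ▸ ha)), Nat.sub_zero]
    rw [harg, List.map_cons, List.sum_cons, List.map_cons, List.prod_cons, tsub_tsub, add_comm]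
    push_cast
    ring

lemma Dxn_monomial {N M : ℕ} (n : Fin N → ℕ) (s : (Fin N ⊕ Fin M) →₀ ℕ) (c : ℝ) :
    Dxn (M := M) n (monomial s c) =
      monomial (s - ∑ l, Finsupp.single (Sum.inl l) (n l))
        (c * ∏ l, (s (Sum.inl l)).descFactorial (n l)) := by
  rw [Dxn, List.ofFn_eq_map,
    list_pderiv_pow Sum.inl Sum.inl_injective n _ (List.nodup_finRange N),
    Fin.sum_univ_def, Fin.prod_univ_def]

lemma Dym_monomial {N M : ℕ} (m : Fin M → ℕ) (s : (Fin N ⊕ Fin M) →₀ ℕ) (c : ℝ) :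
    Dym (N := N) m (monomial s c) =
      monomial (s - ∑ k, Finsupp.single (Sum.inr k) (m k))
        (c * ∏ k, (s (Sum.inr k)).descFactorial (m k)) := by
  rw [Dym, List.ofFn_eq_map,
    list_pderiv_pow Sum.inr Sum.inr_injective m _ (List.nodup_finRange M),
    Fin.sum_univ_def, Fin.prod_univ_def]

lemma prod_X_pow_eq {σ ι : Type*} (g : ι → σ) (e : ι → ℕ) (t : Finset ι) :
    ∏ i ∈ t, (X (g i) : MvPolynomial σ ℝ) ^ e i
      = monomial (∑ i ∈ t, Finsupp.single (g i) (e i)) 1 := by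
  induction t using Finset.cons_induction with
  | empty => simp
  | cons a t ha ih =>
    rw [Finset.prod_cons, Finset.sum_cons, ih, X_pow_eq_monomial, monomial_mul, one_mul]


lemma key_id {N M : ℕ} (n : Fin N → ℕ) (m : Fin M → ℕ) (𝒩 : Fin N → ℕ) (ℳ : Fin M → ℕ)
    (s : ℕ) (h : ∀ k, m k * s + m k ≤ ℳ k) :
    normC n m 𝒩 ℳ (s+1) * (∏ k, (ℳ k - m k * s).descFactorial (m k)) =
      normC n m 𝒩 ℳ s * ∏ l, ∏ j ∈ range (n l), (𝒩 l + n l * s + j + 1) := by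
  unfold normC
  have hx : ∀ l : Fin N, (𝒩 l + n l * (s+1)).factorial
      = (𝒩 l + n l * s).factorial * ∏ j ∈ range (n l), (𝒩 l + n l * s + j + 1) := by
    intro l
    rw [Nat.mul_succ, ← add_assoc, fact_add_helper]
  have hy : ∀ k : Fin M, (ℳ k - m k * s).factorial
      = (ℳ k - m k * (s+1)).factorial * (ℳ k - m k * s).descFactorial (m k) := by
    intro k
    have hk := h k
    rw [Nat.mul_succ]
    revert hk
    generalize m k * s = p
    intro hk
    rw [Nat.sub_add_eq]
    exact (Nat.factorial_mul_descFactorial (by omega)).symm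
  rw [prod_congr rfl fun l (_ : l ∈ univ) => hx l,
    prod_congr rfl fun k (_ : k ∈ univ) => hy k,
    Finset.prod_mul_distrib, Finset.prod_mul_distrib]
  ring

lemma scalar_up (C₀ C₁ B A : ℕ) (hC₀ : 0 < C₀) (hC₁ : 0 < C₁)
    (key : C₁ * A = C₀ * B) :
    (Real.sqrt C₀)⁻¹ * A = Real.sqrt (B * A) * (Real.sqrt C₁)⁻¹ := by
  have h0 : (0:ℝ) < Real.sqrt C₀ := Real.sqrt_pos.2 (by exact_mod_cast hC₀)
  have h1 : (0:ℝ) < Real.sqrt C₁ := Real.sqrt_pos.2 (by exact_mod_cast hC₁)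
  rw [inv_mul_eq_div, ← div_eq_mul_inv, div_eq_div_iff h0.ne' h1.ne']
  have e1 : (A : ℝ) * Real.sqrt C₁ = Real.sqrt ((A:ℝ)^2 * C₁) := by
    rw [Real.sqrt_mul (by positivity), Real.sqrt_sq (by positivity)]
  have e2 : Real.sqrt ((B:ℝ) * A) * Real.sqrt C₀ = Real.sqrt (((B:ℝ) * A) * C₀) := by
    rw [← Real.sqrt_mul (by positivity)]
  rw [e1, e2]
  congr 1
  have h3 : ((C₁ * A * A : ℕ) : ℝ) = ((C₀ * B * A : ℕ) : ℝ) := by rw [key]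
  push_cast at h3 ⊢
  linear_combination h3

lemma scalar_down (C₀ C₁ B A : ℕ) (hC₀ : 0 < C₀) (hC₁ : 0 < C₁)
    (key : C₁ * A = C₀ * B) :
    (Real.sqrt C₁)⁻¹ * B = Real.sqrt (B * A) * (Real.sqrt C₀)⁻¹ := by
  have h0 : (0:ℝ) < Real.sqrt C₀ := Real.sqrt_pos.2 (by exact_mod_cast hC₀)
  have h1 : (0:ℝ) < Real.sqrt C₁ := Real.sqrt_pos.2 (by exact_mod_cast hC₁)
  rw [inv_mul_eq_div, ← div_eq_mul_inv, div_eq_div_iff h1.ne' h0.ne']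
  have e1 : (B : ℝ) * Real.sqrt C₀ = Real.sqrt ((B:ℝ)^2 * C₀) := by
    rw [Real.sqrt_mul (by positivity), Real.sqrt_sq (by positivity)]
  have e2 : Real.sqrt ((B:ℝ) * A) * Real.sqrt C₁ = Real.sqrt (((B:ℝ) * A) * C₁) := by
    rw [← Real.sqrt_mul (by positivity)]
  rw [e1, e2]
  congr 1
  have h3 : ((C₁ * A * B : ℕ) : ℝ) = ((C₀ * B * B : ℕ) : ℝ) := by rw [key]
  push_cast at h3 ⊢
  linear_combination -h3

noncomputable def Efin {N M : ℕ} (n : Fin N → ℕ) (m : Fin M → ℕ) (𝒩 : Fin N → ℕ)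
    (ℳ : Fin M → ℕ) (t : ℕ) : (Fin N ⊕ Fin M) →₀ ℕ :=
  Finsupp.equivFunOnFinite.symm (Sum.elim (fun l => 𝒩 l + t * n l) fun k => ℳ k - t * m k)

lemma Efin_inl {N M : ℕ} (n : Fin N → ℕ) (m : Fin M → ℕ) (𝒩 : Fin N → ℕ) (ℳ : Fin M → ℕ)
    (t : ℕ) (l : Fin N) : Efin n m 𝒩 ℳ t (Sum.inl l) = 𝒩 l + t * n l := rfl

lemma Efin_inr {N M : ℕ} (n : Fin N → ℕ) (m : Fin M → ℕ) (𝒩 : Fin N → ℕ) (ℳ : Fin M → ℕ)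
    (t : ℕ) (k : Fin M) : Efin n m 𝒩 ℳ t (Sum.inr k) = ℳ k - t * m k := rfl

lemma basisE_eq {N M : ℕ} (n : Fin N → ℕ) (m : Fin M → ℕ) (𝒩 : Fin N → ℕ) (ℳ : Fin M → ℕ)
    (t : ℕ) : basisE n m 𝒩 ℳ t
      = (Real.sqrt (normC n m 𝒩 ℳ t))⁻¹ • monomial (Efin n m 𝒩 ℳ t) 1 := rfl

lemma sumSx_inl {N M : ℕ} (n : Fin N → ℕ) (l0 : Fin N) :
    (∑ l, Finsupp.single (Sum.inl l : Fin N ⊕ Fin M) (n l)) (Sum.inl l0) = n l0 := by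
  rw [Finsupp.finset_sum_apply]
  simp [Finsupp.single_apply]

lemma sumSx_inr {N M : ℕ} (n : Fin N → ℕ) (k0 : Fin M) :
    (∑ l, Finsupp.single (Sum.inl l : Fin N ⊕ Fin M) (n l)) (Sum.inr k0) = 0 := by
  rw [Finsupp.finset_sum_apply]
  simp [Finsupp.single_apply]

lemma sumSy_inl {N M : ℕ} (m : Fin M → ℕ) (l0 : Fin N) :
    (∑ k, Finsupp.single (Sum.inr k : Fin N ⊕ Fin M) (m k)) (Sum.inl l0) = 0 := by
  rw [Finsupp.finset_sum_apply]
  simp [Finsupp.single_apply]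

lemma sumSy_inr {N M : ℕ} (m : Fin M → ℕ) (k0 : Fin M) :
    (∑ k, Finsupp.single (Sum.inr k : Fin N ⊕ Fin M) (m k)) (Sum.inr k0) = m k0 := by
  rw [Finsupp.finset_sum_apply]
  simp [Finsupp.single_apply]

lemma exp_up {N M : ℕ} (n : Fin N → ℕ) (m : Fin M → ℕ) (𝒩 : Fin N → ℕ) (ℳ : Fin M → ℕ)
    (s : ℕ) :
    (∑ l, Finsupp.single (Sum.inl l : Fin N ⊕ Fin M) (n l))
        + (Efin n m 𝒩 ℳ s - ∑ k, Finsupp.single (Sum.inr k : Fin N ⊕ Fin M) (m k))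
      = Efin n m 𝒩 ℳ (s+1) := by
  ext x
  rcases x with l | k
  · rw [Finsupp.add_apply, Finsupp.tsub_apply, sumSx_inl, sumSy_inl, Efin_inl, Efin_inl,
      Nat.succ_mul]
    generalize s * n l = a
    omega
  · rw [Finsupp.add_apply, Finsupp.tsub_apply, sumSx_inr, sumSy_inr, Efin_inr, Efin_inr,
      Nat.succ_mul]
    generalize s * m k = a
    omega

lemma exp_down {N M : ℕ} (n : Fin N → ℕ) (m : Fin M → ℕ) (𝒩 : Fin N → ℕ) (ℳ : Fin M → ℕ)
    (t : ℕ) (h : ∀ k, (t+1) * m k ≤ ℳ k) :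
    (∑ k, Finsupp.single (Sum.inr k : Fin N ⊕ Fin M) (m k))
        + (Efin n m 𝒩 ℳ (t+1) - ∑ l, Finsupp.single (Sum.inl l : Fin N ⊕ Fin M) (n l))
      = Efin n m 𝒩 ℳ t := by
  ext x
  rcases x with l | k
  · rw [Finsupp.add_apply, Finsupp.tsub_apply, sumSx_inl, sumSy_inl, Efin_inl, Efin_inl,
      Nat.succ_mul]
    generalize t * n l = a
    omega
  · have hk := h k
    rw [Nat.succ_mul] at hk
    rw [Finsupp.add_apply, Finsupp.tsub_apply, sumSx_inr, sumSy_inr, Efin_inr, Efin_inr,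
      Nat.succ_mul]
    revert hk
    generalize t * m k = a
    intro hk
    omega

/-- with respect to the normalized basis `e_s`, `0 ≤ s ≤ r`, the matrix of `H₁` is
tridiagonal, symmetric, with zero diagonal and the stated off-diagonal entries:
`H₁ e_s = (H₁)_{s-1,s} e_{s-1} + (H₁)_{s+1,s} e_{s+1}`, with `(H₁)_{s,s+1} = (H₁)_{s+1,s}`
given by `offd`. -/
theorem H1_tridiagonal {N M : ℕ} (hN : 1 ≤ N) (hM : 1 ≤ M)
    (n : Fin N → ℕ) (m : Fin M → ℕ) (hn : ∀ l, 0 < n l) (hm : ∀ k, 0 < m k)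
    (𝒩 : Fin N → ℕ) (ℳ : Fin M → ℕ) (hrestr : ∃ l', 𝒩 l' < n l')
    (r : ℕ) (hr : r = Finset.univ.inf' ⟨⟨0, hM⟩, Finset.mem_univ _⟩ fun k => ℳ k / m k) :
    ∀ s ≤ r,
      H1 n m (basisE n m 𝒩 ℳ s) =
        (if s = 0 then 0 else offd n m 𝒩 ℳ (s - 1) • basisE n m 𝒩 ℳ (s - 1)) +
          (if s = r then 0 else offd n m 𝒩 ℳ s • basisE n m 𝒩 ℳ (s + 1)) := by
  intro s hs
  have hrle : ∀ k, r ≤ ℳ k / m k := by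
    intro k
    rw [hr]
    exact Finset.inf'_le _ (Finset.mem_univ k)
  have hCpos : ∀ t, 0 < normC n m 𝒩 ℳ t := fun t =>
    mul_pos (Finset.prod_pos fun _ _ => Nat.factorial_pos _)
      (Finset.prod_pos fun _ _ => Nat.factorial_pos _)
  have hH1 : H1 n m (monomial (Efin n m 𝒩 ℳ s) 1) =
      monomial ((∑ k, Finsupp.single (Sum.inr k : Fin N ⊕ Fin M) (m k))
          + (Efin n m 𝒩 ℳ s - ∑ l, Finsupp.single (Sum.inl l : Fin N ⊕ Fin M) (n l)))
        ((∏ l, (𝒩 l + s * n l).descFactorial (n l) : ℕ) : ℝ)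
      + monomial ((∑ l, Finsupp.single (Sum.inl l : Fin N ⊕ Fin M) (n l))
          + (Efin n m 𝒩 ℳ s - ∑ k, Finsupp.single (Sum.inr k : Fin N ⊕ Fin M) (m k)))
        ((∏ k, (ℳ k - s * m k).descFactorial (m k) : ℕ) : ℝ) := by
    rw [H1, LinearMap.add_apply, LinearMap.comp_apply, LinearMap.comp_apply,
      LinearMap.mulLeft_apply, LinearMap.mulLeft_apply, Dxn_monomial, Dym_monomial,
      prod_X_pow_eq Sum.inr m Finset.univ, prod_X_pow_eq Sum.inl n Finset.univ,
      monomial_mul, monomial_mul]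
    simp only [Efin_inl, Efin_inr, one_mul]
  rw [basisE_eq, map_smul, hH1, smul_add]
  congr 1
  -- lowering term
  · rcases s with _ | t
    · rw [if_pos rfl]
      obtain ⟨l', hl'⟩ := hrestr
      have hD : (∏ l, (𝒩 l + 0 * n l).descFactorial (n l)) = 0 :=
        Finset.prod_eq_zero (Finset.mem_univ l')
          (by rw [zero_mul, add_zero]; exact Nat.descFactorial_of_lt hl')
      rw [hD, Nat.cast_zero, monomial_zero, smul_zero]
    · rw [if_neg (Nat.succ_ne_zero t), Nat.succ_sub_one]
      have hkey : ∀ k, m k * t + m k ≤ ℳ k := by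
        intro k
        have h1 : (t+1) * m k ≤ ℳ k :=
          (Nat.le_div_iff_mul_le (hm k)).1 (le_trans hs (hrle k))
        calc m k * t + m k = (t+1) * m k := by ring
          _ ≤ ℳ k := h1
      rw [exp_down n m 𝒩 ℳ t
        (fun k => by rw [show (t+1) * m k = m k * t + m k from by ring]; exact hkey k)]
      have hD : (∏ l, (𝒩 l + (t+1) * n l).descFactorial (n l))
          = ∏ l, ∏ j ∈ Finset.range (n l), (𝒩 l + n l * t + j + 1) :=
        Finset.prod_congr rfl fun l _ => by
          rw [show 𝒩 l + (t+1) * n l = (𝒩 l + n l * t) + n l from by ring, desc_add_helper]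
      have hoffd : offd n m 𝒩 ℳ t = Real.sqrt
          (((∏ l, ∏ j ∈ Finset.range (n l), (𝒩 l + n l * t + j + 1) : ℕ) : ℝ)
            * ((∏ k, (ℳ k - m k * t).descFactorial (m k) : ℕ) : ℝ)) := by
        rw [offd, show (∏ k, ∏ i ∈ Finset.range (m k), (ℳ k - m k * t - i))
            = ∏ k, (ℳ k - m k * t).descFactorial (m k) from
          Finset.prod_congr rfl fun k _ => (Nat.descFactorial_eq_prod_range _ _).symm,
          Nat.cast_mul]
      rw [hD, basisE_eq, hoffd, smul_smul, smul_monomial, smul_monomial]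
      congr 1
      rw [smul_eq_mul, smul_eq_mul, mul_one]
      exact scalar_down (normC n m 𝒩 ℳ t) (normC n m 𝒩 ℳ (t+1)) _ _ (hCpos t) (hCpos (t+1))
        (key_id n m 𝒩 ℳ t hkey)
  -- raising term
  · by_cases hsr : s = r
    · rw [if_pos hsr]
      obtain ⟨k0, -, hk0⟩ := Finset.exists_mem_eq_inf'
        (⟨(⟨0, hM⟩ : Fin M), Finset.mem_univ _⟩ : (Finset.univ : Finset (Fin M)).Nonempty)
        fun k => ℳ k / m k
      have h1 : ℳ k0 / m k0 < s + 1 := by rw [hsr, hr, hk0]; omega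
      have h2 : ℳ k0 < (s + 1) * m k0 := (Nat.div_lt_iff_lt_mul (hm k0)).1 h1
      have hlt : ℳ k0 - s * m k0 < m k0 := by
        rw [Nat.succ_mul] at h2
        have hmk := hm k0
        revert h2
        generalize s * m k0 = a
        intro h2
        omega
      have hA : (∏ k, (ℳ k - s * m k).descFactorial (m k)) = 0 :=
        Finset.prod_eq_zero (Finset.mem_univ k0) (Nat.descFactorial_of_lt hlt)
      rw [hA, Nat.cast_zero, monomial_zero, smul_zero]
    · rw [if_neg hsr]
      have hslt : s + 1 ≤ r := by omega
      have hkey : ∀ k, m k * s + m k ≤ ℳ k := by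
        intro k
        have h1 : (s+1) * m k ≤ ℳ k :=
          (Nat.le_div_iff_mul_le (hm k)).1 (le_trans hslt (hrle k))
        calc m k * s + m k = (s+1) * m k := by ring
          _ ≤ ℳ k := h1
      rw [exp_up]
      have hA : (∏ k, (ℳ k - s * m k).descFactorial (m k))
          = ∏ k, (ℳ k - m k * s).descFactorial (m k) :=
        Finset.prod_congr rfl fun k _ => by rw [mul_comm]
      have hoffd : offd n m 𝒩 ℳ s = Real.sqrt
          (((∏ l, ∏ j ∈ Finset.range (n l), (𝒩 l + n l * s + j + 1) : ℕ) : ℝ)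
            * ((∏ k, (ℳ k - m k * s).descFactorial (m k) : ℕ) : ℝ)) := by
        rw [offd, show (∏ k, ∏ i ∈ Finset.range (m k), (ℳ k - m k * s - i))
            = ∏ k, (ℳ k - m k * s).descFactorial (m k) from
          Finset.prod_congr rfl fun k _ => (Nat.descFactorial_eq_prod_range _ _).symm,
          Nat.cast_mul]
      rw [hA, basisE_eq, hoffd, smul_smul, smul_monomial, smul_monomial]
      congr 1
      rw [smul_eq_mul, smul_eq_mul, mul_one]
      exact scalar_up (normC n m 𝒩 ℳ s) (normC n m 𝒩 ℳ (s+1)) _ _ (hCpos s) (hCpos (s+1))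
        (key_id n m 𝒩 ℳ s hkey)
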